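/- Let G be a finite p-supersolvable group and P a Sylow p-subgroup of G. If the normalizer N_G(P) is p-nilpotent, then G is p-nilpotent. -/

import Mathlib

open Subgroup Pointwise

/-- `A < B` is a chief factor of `G`. -/
def IsChiefFactor (G : Type*) [Group G] (A B : Subgroup G) : Prop :=
  A.Normal ∧ B.Normal ∧ A < B ∧
    ∀ N : Subgroup G, N.Normal → A ≤ N → N ≤ B → N = A ∨ N = B

/-- The order of the factor group `B/A`. -/
noncomputable def factorCard {G : Type*} [Group G] (A B : Subgroup G) : ℕ :=
  Nat.card B / Nat.card A

/-- A finite group is `p`-solvable if every chief factor is a `p`-group or a `p'`-group. -/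
def IsPSolvable (p : ℕ) (G : Type*) [Group G] : Prop :=
  ∀ A B : Subgroup G, IsChiefFactor G A B →
    (∃ n : ℕ, factorCard A B = p ^ n) ∨ ¬ p ∣ factorCard A B

/-- A finite group is `p`-supersolvable if it is `p`-solvable and every `p`-chief factor
has order `p`. -/
def IsPSupersolvable (p : ℕ) (G : Type*) [Group G] : Prop :=
  IsPSolvable p G ∧ ∀ A B : Subgroup G, IsChiefFactor G A B →
    p ∣ factorCard A B → factorCard A B = p

/-- A finite group is `p`-nilpotent if it has a normal Hall `p'`-subgroup. -/
def IsPNilpotent (p : ℕ) (G : Type*) [Group G] : Prop :=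
  ∃ H : Subgroup G, H.Normal ∧ ¬ p ∣ Nat.card H ∧ ∃ n : ℕ, H.index = p ^ n

/-- The quotient `G ⧸ N` is `p`-supersolvable (for `N` normal). -/
def QuotientIsPSupersolvable (p : ℕ) {G : Type*} [Group G] (N : Subgroup G) : Prop :=
  ∀ [N.Normal], IsPSupersolvable p (G ⧸ N)

/-- `R` is the `p`-supersolvable residual of `G`: the smallest normal subgroup with
`p`-supersolvable quotient. -/
def IsPSupersolvableResidual (p : ℕ) {G : Type*} [Group G] (R : Subgroup G) : Prop :=
  R.Normal ∧ QuotientIsPSupersolvable p R ∧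
    ∀ N : Subgroup G, N.Normal → QuotientIsPSupersolvable p N → R ≤ N

/-- the center `Z(K)` of a subgroup `K`, as a subgroup of the ambient group. -/
def centerOf {G : Type*} [Group G] (K : Subgroup G) : Subgroup G :=
  Subgroup.centralizer (K : Set G) ⊓ K

/-- `H` is c-embedded in `G` with respect to `K`: there is `B ≤ G` with `G = HB` and
`H ∩ B ≤ Z(K)`. -/
def IsCEmbedded {G : Type*} [Group G] (H K : Subgroup G) : Prop :=
  ∃ B : Subgroup G, (∀ g : G, ∃ h ∈ H, ∃ b ∈ B, g = h * b) ∧ H ⊓ B ≤ centerOf K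

/-- A group is quaternion-free if no section is isomorphic to the quaternion group `Q₈`. -/
def QuaternionFree (G : Type*) [Group G] : Prop :=
  ∀ (H : Subgroup G) (N : Subgroup H) [N.Normal], IsEmpty ((H ⧸ N) ≃* QuaternionGroup 2)

/-- the conjugate `P^x = x⁻¹ P x`. -/
def conjSub {G : Type*} [Group G] (P : Subgroup G) (x : G) : Subgroup G :=
  (MulAut.conj x⁻¹) • P

universe u

variable {p : ℕ}

lemma aux_card_comap' {G : Type*} [Group G] [Finite G] (N : Subgroup G) [N.Normal]
    (B : Subgroup (G ⧸ N)) :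
    Nat.card (comap (QuotientGroup.mk' N) B) = Nat.card B * Nat.card N := by
  have h1 : Nat.card (comap (QuotientGroup.mk' N) B) * (comap (QuotientGroup.mk' N) B).index
      = Nat.card G := Subgroup.card_mul_index _
  have h2 : (comap (QuotientGroup.mk' N) B).index = B.index :=
    Subgroup.index_comap_of_surjective _ (QuotientGroup.mk'_surjective N)
  have h3 : Nat.card B * B.index = Nat.card (G ⧸ N) := Subgroup.card_mul_index _
  have h4 : Nat.card (G ⧸ N) * Nat.card N = Nat.card G :=
    (Subgroup.card_eq_card_quotient_mul_card_subgroup N).symm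
  have h5 : B.index ≠ 0 := Subgroup.index_ne_zero_of_finite
  apply Nat.eq_of_mul_eq_mul_right (Nat.pos_of_ne_zero h5)
  rw [h2] at h1
  rw [h1, mul_right_comm, h3, h4]

lemma aux_card_map_dvd {G H : Type*} [Group G] [Group H] [Finite G] (f : G →* H)
    (K : Subgroup G) : Nat.card (map f K) ∣ Nat.card K := by
  have : map f K = (f.comp K.subtype).range := by
    rw [MonoidHom.range_comp, Subgroup.range_subtype]
  rw [this]
  have h := Nat.card_congr (QuotientGroup.quotientKerEquivRange (f.comp K.subtype)).toEquiv
  rw [← h, ← Subgroup.index_eq_card]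
  exact Subgroup.index_dvd_card _

lemma aux_le_of_coprime' {X : Type*} [Group X] [Finite X] {H K : Subgroup X} (hH : H.Normal)
    (h : Nat.Coprime (Nat.card K) H.index) : K ≤ H := by
  haveI := hH
  set f := QuotientGroup.mk' H
  have hd1 : Nat.card (map f K) ∣ Nat.card K := aux_card_map_dvd f K
  have hd2 : Nat.card (map f K) ∣ H.index := by
    rw [Subgroup.index_eq_card]
    exact Subgroup.card_subgroup_dvd_card _
  have h1 : Nat.card (map f K) = 1 :=
    Nat.eq_one_of_dvd_coprimes h hd1 hd2
  have h2 : map f K = ⊥ := Subgroup.card_eq_one.mp h1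
  have h3 : K ≤ f.ker := (Subgroup.map_eq_bot_iff K).mp h2
  rwa [QuotientGroup.ker_mk'] at h3

lemma aux_pnilpotent_of_surjective (hp : p.Prime) {X Y : Type*} [Group X] [Group Y] [Finite X]
    (f : X →* Y) (hf : Function.Surjective f) (h : IsPNilpotent p X) : IsPNilpotent p Y := by
  obtain ⟨H, hN, hcard, n, hidx⟩ := h
  refine ⟨map f H, hN.map f hf, fun hd => hcard (hd.trans (aux_card_map_dvd f H)), ?_⟩
  have h1 : (map f H).index ∣ H.index := H.index_map_dvd hf
  rw [hidx] at h1
  obtain ⟨m, _, hm⟩ := (Nat.dvd_prime_pow hp).mp h1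
  exact ⟨m, hm⟩

lemma aux_pnilpotent_equiv (hp : p.Prime) {X Y : Type*} [Group X] [Group Y] [Finite X]
    (e : X ≃* Y) (h : IsPNilpotent p X) : IsPNilpotent p Y :=
  aux_pnilpotent_of_surjective hp e.toMonoidHom e.surjective h

lemma aux_pnilpotent_subgroup (hp : p.Prime) {X : Type*} [Group X] [Finite X] (K : Subgroup X)
    (h : IsPNilpotent p X) : IsPNilpotent p K := by
  obtain ⟨H, hN, hcard, n, hidx⟩ := h
  haveI := hN
  refine ⟨H.subgroupOf K, hN.comap K.subtype, ?_, ?_⟩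
  · intro hd
    apply hcard
    refine hd.trans ?_
    have h1 : Nat.card (H.subgroupOf K) = Nat.card ((H.subgroupOf K).map K.subtype) :=
      Nat.card_congr (Subgroup.equivMapOfInjective _ _ K.subtype_injective).toEquiv
    rw [h1, Subgroup.subgroupOf_map_subtype]
    exact Subgroup.card_dvd_of_le inf_le_left
  · have h1 : (H.subgroupOf K).index = H.relIndex K := rfl
    have h2 : H.relIndex K ∣ H.index := Subgroup.relIndex_dvd_index_of_normal H K
    rw [hidx] at h2
    rw [h1] at *
    obtain ⟨m, _, hm⟩ := (Nat.dvd_prime_pow hp).mp h2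
    exact ⟨m, hm⟩

lemma aux_pnilpotent_of_le (hp : p.Prime) {X : Type*} [Group X] [Finite X] {K L : Subgroup X}
    (hKL : K ≤ L) (h : IsPNilpotent p L) : IsPNilpotent p K :=
  aux_pnilpotent_equiv hp (Subgroup.subgroupOfEquivOfLe hKL)
    (aux_pnilpotent_subgroup hp (K.subgroupOf L) h)


noncomputable def aux_quotIso {G : Type*} [Group G] (N C : Subgroup G) [N.Normal]
    (h : N ≤ C) : (↥C ⧸ N.subgroupOf C) ≃* ↥(map (QuotientGroup.mk' N) C) := by
  have hker : ((QuotientGroup.mk' N).comp C.subtype).ker = N.subgroupOf C := by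
    rw [← MonoidHom.comap_ker, QuotientGroup.ker_mk']
    rfl
  have hrange : ((QuotientGroup.mk' N).comp C.subtype).range = map (QuotientGroup.mk' N) C := by
    rw [MonoidHom.range_comp, Subgroup.range_subtype]
  haveI : (((QuotientGroup.mk' N).comp C.subtype).ker).Normal := inferInstance
  haveI : (N.subgroupOf C).Normal := hker ▸ inferInstance
  exact (QuotientGroup.quotientMulEquivOfEq hker.symm).trans
    ((QuotientGroup.quotientKerEquivRange _).trans (MulEquiv.subgroupCongr hrange))



lemma aux_pnilpotent_of_pquotient (hp : p.Prime) {X : Type*} [Group X] [Finite X]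
    (H : Subgroup X) [H.Normal] (h1 : ¬ p ∣ Nat.card H) (h2 : IsPNilpotent p (X ⧸ H)) :
    IsPNilpotent p X := by
  obtain ⟨W, hWn, hWc, n, hWi⟩ := h2
  refine ⟨comap (QuotientGroup.mk' H) W, hWn.comap _, ?_, ⟨n, ?_⟩⟩
  · rw [aux_card_comap']
    intro hd
    rcases (Nat.Prime.dvd_mul hp).mp hd with h | h
    exacts [hWc h, h1 h]
  · rw [Subgroup.index_comap_of_surjective _ (QuotientGroup.mk'_surjective H), hWi]

lemma aux_normal_of_conj_map_le {X : Type*} [Group X] (H : Subgroup X)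
    (h : ∀ g : X, Subgroup.map (MulAut.conj g).toMonoidHom H ≤ H) : H.Normal := by
  constructor
  intro n hn g
  exact h g ⟨n, hn, rfl⟩

lemma aux_card_conj_map {X : Type*} [Group X] (H : Subgroup X) (g : X) :
    Nat.card (Subgroup.map (MulAut.conj g).toMonoidHom H) = Nat.card H :=
  (Nat.card_congr (Subgroup.equivMapOfInjective H _ (MulAut.conj g).injective).toEquiv).symm



lemma aux_pnilpotent_of_central (hp : p.Prime) {X : Type*} [Group X] [Finite X]
    (Z : Subgroup X) [Z.Normal] (hZ : Z ≤ Subgroup.center X) (hcard : Nat.card Z = p)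
    (h2 : IsPNilpotent p (X ⧸ Z)) : IsPNilpotent p X := by
  have hppos : 0 < p := hp.pos
  have hZn : Z.Normal := inferInstance
  obtain ⟨Hb, hHbn, hHbc, n, hHbi⟩ := h2
  set W : Subgroup X := comap (QuotientGroup.mk' Z) Hb with hWdef
  have hZW : Z ≤ W := by
    intro x hx
    show QuotientGroup.mk' Z x ∈ Hb
    have : QuotientGroup.mk' Z x = 1 := by
      rw [← MonoidHom.mem_ker, QuotientGroup.ker_mk' Z]
      exact hx
    rw [this]
    exact one_mem Hb
  have hWn : W.Normal := hHbn.comap _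
  have hWcard : Nat.card W = Nat.card Hb * p := by
    rw [hWdef, aux_card_comap' Z Hb, hcard]
  set Z' : Subgroup W := Z.subgroupOf W with hZ'def
  haveI hZ'n : Z'.Normal := hZn.comap W.subtype
  have hZ'card : Nat.card Z' = p := by
    rw [hZ'def, Nat.card_congr (Subgroup.subgroupOfEquivOfLe hZW).toEquiv, hcard]
  have hcomm : ∀ (z : X), z ∈ Z → ∀ a : X, z * a = a * z := by
    intro z hz a
    exact (Subgroup.mem_center_iff.mp (hZ hz) a).symm
  have hZ'i : Z'.index = Nat.card Hb := by
    have h1 : Nat.card Z' * Z'.index = Nat.card W := Subgroup.card_mul_index _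
    rw [hZ'card, hWcard, mul_comm (Nat.card Hb) p] at h1
    exact Nat.eq_of_mul_eq_mul_left hppos h1
  have hcop : Nat.Coprime (Nat.card Z') Z'.index := by
    rw [hZ'card, hZ'i]
    exact (Nat.Prime.coprime_iff_not_dvd hp).mpr hHbc
  obtain ⟨Q, hQ⟩ := Subgroup.exists_right_complement'_of_coprime hcop
  have hQcard : Nat.card Q = Nat.card Hb := by
    have h1 := hQ.card_mul
    rw [hZ'card, hWcard, mul_comm (Nat.card Hb) p] at h1
    exact Nat.eq_of_mul_eq_mul_left hppos h1
  have hQc : ¬ p ∣ Nat.card Q := by rw [hQcard]; exact hHbc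
  have hQpos : 0 < Nat.card Q := Nat.card_pos
  have hQi : Q.index = p := by
    have h1 : Nat.card Q * Q.index = Nat.card W := Subgroup.card_mul_index _
    rw [hQcard, hWcard] at h1
    exact Nat.eq_of_mul_eq_mul_left (hQcard ▸ hQpos) h1
  have hQn : Q.Normal := by
    constructor
    intro m hm w
    obtain ⟨⟨⟨z, hz⟩, ⟨q, hq⟩⟩, hzq, -⟩ := Subgroup.IsComplement.existsUnique hQ w
    simp only at hzq
    have hzZ : (↑z : X) ∈ Z := Subgroup.mem_subgroupOf.mp hz
    have hzc : ∀ a : ↥W, z * a = a * z := by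
      intro a
      ext
      exact hcomm _ hzZ _
    have hr : q * m * q⁻¹ ∈ Q := mul_mem (mul_mem hq hm) (inv_mem hq)
    have key : w * m * w⁻¹ = z * (q * m * q⁻¹) * z⁻¹ := by
      rw [← hzq]; group
    rw [key, hzc, mul_assoc, mul_inv_cancel, mul_one]
    exact hr
  set Hgrp : Subgroup X := map W.subtype Q with hHdef
  have hHle : Hgrp ≤ W := Subgroup.map_subtype_le _
  have hHcard : Nat.card Hgrp = Nat.card Q :=
    (Nat.card_congr (Subgroup.equivMapOfInjective _ _ W.subtype_injective).toEquiv).symm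
  have hHn : Hgrp.Normal := by
    apply aux_normal_of_conj_map_le
    intro g
    set K : Subgroup X := Subgroup.map (MulAut.conj g).toMonoidHom Hgrp with hKdef
    have hKW : K ≤ W := by
      rintro x ⟨y, hy, rfl⟩
      have : g * y * g⁻¹ ∈ W := hWn.conj_mem y (hHle hy) g
      simpa using this
    have hKcard : Nat.card K = Nat.card Q := by rw [hKdef, aux_card_conj_map, hHcard]
    have hK' : K.subgroupOf W ≤ Q := by
      apply aux_le_of_coprime' hQn
      have : Nat.card (K.subgroupOf W) = Nat.card Q := by
        rw [Nat.card_congr (Subgroup.subgroupOfEquivOfLe hKW).toEquiv, hKcard]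
      rw [this, hQi]
      exact ((Nat.Prime.coprime_iff_not_dvd hp).mpr hQc).symm
    have := Subgroup.map_subtype_le_map_subtype.mpr hK'
    rwa [Subgroup.subgroupOf_map_subtype, inf_eq_left.mpr hKW] at this
  refine ⟨Hgrp, hHn, by rw [hHcard]; exact hQc, ⟨n + 1, ?_⟩⟩
  have h1 : Hgrp.index * Nat.card Hgrp = Nat.card X := Subgroup.index_mul_card _
  have h2 : Nat.card (X ⧸ Z) * Nat.card Z = Nat.card X :=
    (Subgroup.card_eq_card_quotient_mul_card_subgroup Z).symm
  have h3 : Nat.card Hb * Hb.index = Nat.card (X ⧸ Z) := Subgroup.card_mul_index _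
  rw [hHcard, hQcard] at h1
  rw [← h3, hHbi, hcard] at h2
  apply Nat.eq_of_mul_eq_mul_right (hQcard ▸ hQpos)
  rw [h1, ← h2]
  ring

lemma aux_centralizer_normal {G : Type*} [Group G] (N : Subgroup G) (hN : N.Normal) :
    (Subgroup.centralizer (N : Set G)).Normal := by
  constructor
  intro x hx g
  rw [Subgroup.mem_centralizer_iff]
  intro h hh
  have h1 : g⁻¹ * h * g ∈ N := by
    have := hN.conj_mem h hh g⁻¹
    simpa using this
  have h2 : (g⁻¹ * h * g) * x = x * (g⁻¹ * h * g) :=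
    Subgroup.mem_centralizer_iff.mp hx _ h1
  have : h * (g * x * g⁻¹) = g * ((g⁻¹ * h * g) * x) * g⁻¹ := by group
  rw [this, h2]
  group

lemma aux_not_dvd_index_centralizer {p : ℕ} (hp : p.Prime) {G : Type*} [Group G] [Finite G]
    (N : Subgroup G) [N.Normal] (hc : Nat.card N = p) :
    ¬ p ∣ (Subgroup.centralizer (N : Set G)).index := by
  haveI : Fact p.Prime := ⟨hp⟩
  haveI : IsCyclic N := isCyclic_of_prime_card hc
  have hker : (MulAut.conjNormal (H := N) : G →* MulAut N).ker
      = Subgroup.centralizer (N : Set G) := by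
    ext g
    rw [MonoidHom.mem_ker, Subgroup.mem_centralizer_iff]
    constructor
    · intro h x hx
      have h1 : MulAut.conjNormal g ⟨x, hx⟩ = (1 : MulAut ↥N) ⟨x, hx⟩ := by rw [h]
      have h2 : g * x * g⁻¹ = x := by
        have := congrArg (Subtype.val) h1
        rwa [MulAut.conjNormal_apply] at this
      calc x * g = (g * x * g⁻¹) * g := by rw [h2]
      _ = g * x := by group
    · intro h
      apply MulEquiv.ext
      intro x
      apply Subtype.ext
      rw [MulAut.conjNormal_apply]
      have hx := h x x.2
      calc g * ↑x * g⁻¹ = (↑x * g) * g⁻¹ := by rw [hx]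
      _ = ((1 : MulAut ↥N) x : G) := by simp
  have hidx : (Subgroup.centralizer (N : Set G)).index ∣ Nat.card (MulAut N) := by
    rw [← hker, Subgroup.index_eq_card,
      Nat.card_congr (QuotientGroup.quotientKerEquivRange _).toEquiv]
    exact Subgroup.card_subgroup_dvd_card _
  have hcard : Nat.card (MulAut N) = p - 1 := by
    rw [IsCyclic.card_mulAut, hc, Nat.totient_prime hp]
  rw [hcard] at hidx
  intro hdvd
  have hp2 := hp.two_le
  have h1 : p ∣ p - 1 := hdvd.trans hidx
  have h2 : 0 < p - 1 := by omega
  have := Nat.le_of_dvd h2 h1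
  omega

lemma aux_exists_minimal_normal {G : Type*} [Group G] [Finite G] (h : Nontrivial G) :
    ∃ N : Subgroup G, N.Normal ∧ N ≠ ⊥ ∧
      ∀ M : Subgroup G, M.Normal → M ≤ N → M = ⊥ ∨ M = N := by
  classical
  have hS : ({N : Subgroup G | N.Normal ∧ N ≠ ⊥} : Set (Subgroup G)).Finite := Set.toFinite _
  have hne : ({N : Subgroup G | N.Normal ∧ N ≠ ⊥} : Set (Subgroup G)).Nonempty :=
    ⟨⊤, ⟨inferInstance, fun ht => by
      rcases exists_pair_ne G with ⟨a, b, hab⟩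
      have ha : a ∈ (⊤ : Subgroup G) := trivial
      have hb : b ∈ (⊤ : Subgroup G) := trivial
      rw [ht, Subgroup.mem_bot] at ha hb
      exact hab (ha.trans hb.symm)⟩⟩
  obtain ⟨N, ⟨hNn, hNb⟩, hmin⟩ :=
    Set.Finite.exists_minimalFor (fun N : Subgroup G => Nat.card N) _ hS hne
  refine ⟨N, hNn, hNb, fun M hMn hMle => ?_⟩
  by_cases hMb : M = ⊥
  · exact Or.inl hMb
  · right
    have h1 : Nat.card M ≤ Nat.card N := Subgroup.card_le_of_le hMle
    have h2 := hmin (j := M) ⟨hMn, hMb⟩ h1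
    exact Subgroup.eq_of_le_of_card_ge hMle h2

lemma aux_quotient_pss {p : ℕ} {G : Type*} [Group G] [Finite G] (N : Subgroup G) [N.Normal]
    (hG : IsPSupersolvable p G) : IsPSupersolvable p (G ⧸ N) := by
  set π := QuotientGroup.mk' N
  have hsurj : Function.Surjective π := QuotientGroup.mk'_surjective N
  have key : ∀ A B : Subgroup (G ⧸ N), IsChiefFactor (G ⧸ N) A B →
      IsChiefFactor G (comap π A) (comap π B) ∧
        factorCard (comap π A) (comap π B) = factorCard A B := by
    rintro A B ⟨hAn, hBn, hAB, hmin⟩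
    have hNA : N ≤ comap π A := by
      intro x hx
      show π x ∈ A
      have : π x = 1 := by
        rw [← MonoidHom.mem_ker, QuotientGroup.ker_mk' N]; exact hx
      rw [this]; exact one_mem A
    have hNB : N ≤ comap π B := le_trans hNA (comap_mono hAB.le)
    have hchief : IsChiefFactor G (comap π A) (comap π B) := by
      refine ⟨hAn.comap π, hBn.comap π, ?_, ?_⟩
      · refine lt_of_le_of_ne (comap_mono hAB.le) (fun h => hAB.ne ?_)
        have := congrArg (map π) h
        rwa [Subgroup.map_comap_eq_self_of_surjective hsurj,
          Subgroup.map_comap_eq_self_of_surjective hsurj] at this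
      · intro M hMn h1 h2
        have hNM : N ≤ M := le_trans hNA h1
        have hMeq : comap π (map π M) = M := by
          rw [Subgroup.comap_map_eq, QuotientGroup.ker_mk' N, sup_eq_left.mpr hNM]
        have h3 : map π M ≤ B := by
          have := Subgroup.map_mono (f := π) h2
          rwa [Subgroup.map_comap_eq_self_of_surjective hsurj] at this
        have h4 : A ≤ map π M := by
          have := Subgroup.map_mono (f := π) h1
          rwa [Subgroup.map_comap_eq_self_of_surjective hsurj] at this
        rcases hmin (map π M) (hMn.map π hsurj) h4 h3 with h | h
        · left; rw [← hMeq, h]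
        · right; rw [← hMeq, h]
    refine ⟨hchief, ?_⟩
    unfold factorCard
    rw [aux_card_comap' N A, aux_card_comap' N B,
      Nat.mul_div_mul_right _ _ Nat.card_pos]
  constructor
  · intro A B hcf
    have ⟨hc, he⟩ := key A B hcf
    rw [← he]
    exact hG.1 _ _ hc
  · intro A B hcf hdvd
    have ⟨hc, he⟩ := key A B hcf
    rw [← he]
    rw [← he] at hdvd
    exact hG.2 _ _ hc hdvd

lemma aux_N_le_comap {G : Type*} [Group G] (N : Subgroup G) [N.Normal]
    (B : Subgroup (G ⧸ N)) : N ≤ comap (QuotientGroup.mk' N) B := by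
  intro x hx
  show QuotientGroup.mk' N x ∈ B
  have : QuotientGroup.mk' N x = 1 := by
    rw [← MonoidHom.mem_ker, QuotientGroup.ker_mk' N]; exact hx
  rw [this]; exact one_mem B

lemma main_induction {p : ℕ} (hp : p.Prime) :
    ∀ (n : ℕ) (G : Type u) [Group G] [Finite G], Nat.card G ≤ n → IsPSupersolvable p G →
      ∃ C : Subgroup G, C.Normal ∧ ¬ p ∣ C.index ∧ IsPNilpotent p C := by
  intro n
  induction n with
  | zero =>
    intro G _ _ hcard _
    have := Nat.card_pos (α := G)
    omega
  | succ n ih =>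
    intro G _ _ hcard hss
    by_cases hpG : p ∣ Nat.card G
    swap
    · refine ⟨⊥, inferInstance, ?_, ?_⟩
      · rwa [Subgroup.index_bot]
      · refine ⟨⊥, inferInstance, ?_, ⟨0, ?_⟩⟩
        · rw [Subgroup.card_bot]
          exact Nat.Prime.not_dvd_one hp
        · rw [Subgroup.index_bot, pow_zero]
          exact Subgroup.card_bot
    · have h2 : 2 ≤ Nat.card G := le_trans hp.two_le (Nat.le_of_dvd Nat.card_pos hpG)
      haveI : Nontrivial G := Finite.one_lt_card_iff_nontrivial.mp h2
      obtain ⟨N, hNn, hNb, hNmin⟩ := aux_exists_minimal_normal ‹_›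
      haveI := hNn
      have hchief : IsChiefFactor G ⊥ N :=
        ⟨inferInstance, hNn, bot_lt_iff_ne_bot.mpr hNb, fun M hM _ h2 => hNmin M hM h2⟩
      have hfc : factorCard ⊥ N = Nat.card N := by
        unfold factorCard; rw [Subgroup.card_bot, Nat.div_one]
      have hNcard2 : 2 ≤ Nat.card N := by
        have h1 : Nat.card N ≠ 1 := fun h => hNb (Subgroup.card_eq_one.mp h)
        have := Nat.card_pos (α := N)
        omega
      have hcard' : Nat.card (G ⧸ N) ≤ n := by
        have h3 : Nat.card (G ⧸ N) * Nat.card N = Nat.card G :=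
          (Subgroup.card_eq_card_quotient_mul_card_subgroup N).symm
        have h4 : Nat.card (G ⧸ N) * 2 ≤ Nat.card (G ⧸ N) * Nat.card N :=
          Nat.mul_le_mul_left _ hNcard2
        have := Nat.card_pos (α := G ⧸ N)
        omega
      obtain ⟨Cb, hCbn, hCbi, hCbnil⟩ := ih (G ⧸ N) hcard' (aux_quotient_pss N hss)
      haveI := hCbn
      set π := QuotientGroup.mk' N with hπ
      have hsurj : Function.Surjective π := QuotientGroup.mk'_surjective N
      set C' : Subgroup G := comap π Cb with hC'def
      have hC'n : C'.Normal := hCbn.comap π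
      have hC'i : C'.index = Cb.index := Subgroup.index_comap_of_surjective _ hsurj
      have hNC' : N ≤ C' := aux_N_le_comap N Cb
      have hmapC' : map π C' = Cb := Subgroup.map_comap_eq_self_of_surjective hsurj Cb
      by_cases hpN : p ∣ Nat.card N
      · -- |N| = p
        have hNp : Nat.card N = p := by
          have := hss.2 ⊥ N hchief (by rwa [hfc])
          rwa [hfc] at this
        haveI : Fact p.Prime := ⟨hp⟩
        haveI : IsCyclic N := isCyclic_of_prime_card hNp
        set Z := Subgroup.centralizer (N : Set G) with hZdef
        have hZn : Z.Normal := aux_centralizer_normal N hNn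
        set C : Subgroup G := C' ⊓ Z with hCdef
        have hCn : C.Normal := by
          constructor
          intro x hx g
          rw [hCdef, Subgroup.mem_inf] at hx ⊢
          exact ⟨hC'n.conj_mem x hx.1 g, hZn.conj_mem x hx.2 g⟩
        have hCi : ¬ p ∣ C.index := by
          have h1 : (C' ⊓ Z).relIndex C' * C'.index = (C' ⊓ Z).index :=
            Subgroup.relIndex_mul_index inf_le_left
          have h2 : (C' ⊓ Z).relIndex C' = Z.relIndex C' := by
            rw [inf_comm, Subgroup.inf_relIndex_right]
          have h3 : Z.relIndex C' ∣ Z.index := by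
            haveI := hZn
            exact Subgroup.relIndex_dvd_index_of_normal Z C'
          intro hd
          rw [hCdef, ← h1, h2] at hd
          rcases (Nat.Prime.dvd_mul hp).mp hd with h | h
          · exact aux_not_dvd_index_centralizer hp N hNp (h.trans h3)
          · rw [hC'i] at h; exact hCbi h
        have hNZ : N ≤ Z := by
          intro x hx
          rw [hZdef, Subgroup.mem_centralizer_iff]
          intro y hy
          have : (⟨y, hy⟩ : N) * ⟨x, hx⟩ = ⟨x, hx⟩ * ⟨y, hy⟩ := by
            letI : CommGroup N := IsCyclic.commGroup
            exact mul_comm _ _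
          exact congrArg Subtype.val this
        have hNC : N ≤ C := le_inf hNC' hNZ
        haveI hN'n : (N.subgroupOf C).Normal := hNn.comap C.subtype
        have hN'card : Nat.card (N.subgroupOf C) = p := by
          rw [Nat.card_congr (Subgroup.subgroupOfEquivOfLe hNC).toEquiv, hNp]
        have hN'central : N.subgroupOf C ≤ Subgroup.center C := by
          intro z hz
          rw [Subgroup.mem_center_iff]
          intro g
          apply Subtype.ext
          have hzN : (↑z : G) ∈ N := hz
          have hgZ : (↑g : G) ∈ Z := g.2.2
          simp only [Subgroup.coe_mul]
          exact (Subgroup.mem_centralizer_iff.mp hgZ _ hzN).symm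
        have hmapC : map π C ≤ Cb := by
          rw [← hmapC']
          exact Subgroup.map_mono (f := π) inf_le_left
        have hq : IsPNilpotent p (↥C ⧸ N.subgroupOf C) := by
          apply aux_pnilpotent_equiv hp (aux_quotIso N C hNC).symm
          exact aux_pnilpotent_of_le hp hmapC hCbnil
        exact ⟨C, hCn, hCi, aux_pnilpotent_of_central hp (N.subgroupOf C) hN'central
          hN'card hq⟩
      · -- p'  case
        refine ⟨C', hC'n, by rwa [hC'i], ?_⟩
        haveI hN'n : (N.subgroupOf C').Normal := hNn.comap C'.subtype
        apply aux_pnilpotent_of_pquotient hp (N.subgroupOf C')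
        · rwa [Nat.card_congr (Subgroup.subgroupOfEquivOfLe hNC').toEquiv]
        · apply aux_pnilpotent_equiv hp (aux_quotIso N C' hNC').symm
          rw [hmapC']
          exact hCbnil

/-- a p-supersolvable group with p-nilpotent Sylow normalizer is p-nilpotent. -/
theorem stmt1 (p : ℕ) (hp : p.Prime) (G : Type*) [Group G] [Finite G]
    (hG : IsPSupersolvable p G) (P : Sylow p G)
    (hnorm : IsPNilpotent p (Subgroup.normalizer (((P : Subgroup G) : Set G)))) :
    IsPNilpotent p G := by
  haveI : Fact p.Prime := ⟨hp⟩
  obtain ⟨C, hCn, hCi, hCnil⟩ := main_induction hp (Nat.card G) G le_rfl hG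
  haveI := hCn
  obtain ⟨H₀, hH₀n, hH₀c, n, hH₀i⟩ := hCnil
  set H : Subgroup G := map C.subtype H₀ with hHdef
  have hHle : H ≤ C := Subgroup.map_subtype_le _
  have hHcard : Nat.card H = Nat.card H₀ :=
    (Nat.card_congr (Subgroup.equivMapOfInjective _ _ C.subtype_injective).toEquiv).symm
  have hHc : ¬ p ∣ Nat.card H := by rwa [hHcard]
  have hCcard : Nat.card C = Nat.card H * p ^ n := by
    rw [hHcard, ← hH₀i]
    exact (Subgroup.card_mul_index H₀).symm
  obtain ⟨k, hPk⟩ : ∃ k, Nat.card P = p ^ k := (IsPGroup.iff_card).mp P.2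
  have hPC : (P : Subgroup G) ≤ C := by
    apply aux_le_of_coprime' hCn
    rw [hPk]
    exact Nat.Coprime.pow_left _ ((Nat.Prime.coprime_iff_not_dvd hp).mpr hCi)
  have hH₀cop : Nat.Coprime (Nat.card H₀) (p ^ n) :=
    Nat.Coprime.pow_right _ (Nat.coprime_comm.mp ((Nat.Prime.coprime_iff_not_dvd hp).mpr hH₀c))
  have hHn : H.Normal := by
    apply aux_normal_of_conj_map_le
    intro g
    set K := Subgroup.map (MulAut.conj g).toMonoidHom H with hKdef
    have hKC : K ≤ C := by
      rintro x ⟨y, hy, rfl⟩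
      have : g * y * g⁻¹ ∈ C := hCn.conj_mem y (hHle hy) g
      simpa using this
    have hKcard : Nat.card K = Nat.card H₀ := by rw [hKdef, aux_card_conj_map, hHcard]
    have h1 : K.subgroupOf C ≤ H₀ := by
      apply aux_le_of_coprime' hH₀n
      rw [Nat.card_congr (Subgroup.subgroupOfEquivOfLe hKC).toEquiv, hKcard, hH₀i]
      exact hH₀cop
    have := Subgroup.map_subtype_le_map_subtype.mpr h1
    rwa [Subgroup.subgroupOf_map_subtype, inf_eq_left.mpr hKC] at this
  haveI := hHn
  have hG1 : Nat.card H * p ^ n * C.index = Nat.card G := by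
    rw [← hCcard]; exact Subgroup.card_mul_index C
  have hPn : Nat.card P = p ^ n := by
    have hfac : (Nat.card G).factorization p = n := by
      rw [← hG1, Nat.factorization_mul (Nat.mul_ne_zero Nat.card_pos.ne' (pow_ne_zero n hp.pos.ne')) Subgroup.index_ne_zero_of_finite,
        Nat.factorization_mul Nat.card_pos.ne' (pow_ne_zero n hp.pos.ne')]
      simp [Nat.factorization_eq_zero_of_not_dvd hHc,
        Nat.factorization_eq_zero_of_not_dvd hCi, hp.factorization_pow]
    rw [Sylow.card_eq_multiplicity P, hfac]
  have hsup : H ⊔ (P : Subgroup G) = C := by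
    apply Subgroup.eq_of_le_of_card_ge (sup_le hHle hPC)
    have hd1 : Nat.card H ∣ Nat.card ↥(H ⊔ (P : Subgroup G)) := Subgroup.card_dvd_of_le le_sup_left
    have hd2 : Nat.card (P : Subgroup G) ∣ Nat.card ↥(H ⊔ (P : Subgroup G)) :=
      Subgroup.card_dvd_of_le le_sup_right
    have hcop : Nat.Coprime (Nat.card H) (Nat.card (P : Subgroup G)) := by
      rw [show Nat.card (P : Subgroup G) = p ^ n from hPn]
      rw [hHcard]
      exact hH₀cop
    have hdvd : Nat.card H * Nat.card (P : Subgroup G) ∣ Nat.card ↥(H ⊔ (P : Subgroup G)) :=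
      hcop.mul_dvd_of_dvd_of_dvd hd1 hd2
    rw [hCcard, ← show Nat.card (P : Subgroup G) = p ^ n from hPn]
    exact Nat.le_of_dvd Nat.card_pos hdvd
  have hfr : (Subgroup.normalizer ((P : Subgroup G) : Set G)) ⊔ C = ⊤ := Sylow.normalizer_sup_eq_top' P hPC
  have htop : H ⊔ (Subgroup.normalizer ((P : Subgroup G) : Set G)) = ⊤ := by
    rw [← hfr, ← hsup, sup_comm ((Subgroup.normalizer ((P : Subgroup G) : Set G))), sup_assoc,
      sup_eq_right.mpr Subgroup.le_normalizer]
  have hmap : map (QuotientGroup.mk' H) ((Subgroup.normalizer ((P : Subgroup G) : Set G))) = ⊤ := by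
    have h1 : map (QuotientGroup.mk' H) (H ⊔ (Subgroup.normalizer ((P : Subgroup G) : Set G))) = ⊤ := by
      rw [htop]
      exact Subgroup.map_top_of_surjective _ (QuotientGroup.mk'_surjective H)
    rwa [Subgroup.map_sup, QuotientGroup.map_mk'_self, bot_sup_eq] at h1
  have hsurj2 : Function.Surjective
      ((QuotientGroup.mk' H).comp ((Subgroup.normalizer ((P : Subgroup G) : Set G)).subtype)) := by
    apply MonoidHom.range_eq_top.mp
    rw [MonoidHom.range_comp, Subgroup.range_subtype, hmap]
  exact aux_pnilpotent_of_pquotient hp H hHc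
    (aux_pnilpotent_of_surjective hp _ hsurj2 hnorm)
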